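/- Let G be a graph with at least 3 vertices and t ≥ 1, and let φ be an automorphism of μ_t(G). If φ(w) is a vertex at level s for some 0 ≤ s ≤ t−1, then G has no dominating vertex. -/

import Mathlib

open SimpleGraph

/-- The generalized Mycielskian `μ_t(G)`: levels `0,…,t` of copies of `V(G)`
plus a root `none`. Level-0 vertices are the original vertices. -/
def genMyc {V : Type*} (G : SimpleGraph V) (t : ℕ) :
    SimpleGraph (Option (Fin (t + 1) × V)) :=
  SimpleGraph.fromRel fun a b =>
    match a, b with
    | some (s, i), some (s', j) =>
        ((s : ℕ) = 0 ∧ (s' : ℕ) = 0 ∧ G.Adj i j) ∨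
        ((s' : ℕ) = (s : ℕ) + 1 ∧ G.Adj i j)
    | some (s, _), none => (s : ℕ) = t
    | _, _ => False

/-- The (traditional) Mycielskian `μ(G)`. -/
def myc {V : Type*} (G : SimpleGraph V) : SimpleGraph (Option (Fin 2 × V)) :=
  genMyc G 1

/-- The star `K_{1,m}` with center `0` and `m` leaves. -/
def starG (m : ℕ) : SimpleGraph (Fin (m + 1)) :=
  SimpleGraph.fromRel fun a _ => a = 0

/-- A `d`-coloring is distinguishing if only the trivial automorphism preserves it. -/
def IsDistinguishing {V : Type*} (H : SimpleGraph V) (d : ℕ) (c : V → Fin d) : Prop :=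
  ∀ φ : H ≃g H, (∀ v, c (φ v) = c v) → ∀ v, φ v = v

/-- The distinguishing number of a graph. -/
noncomputable def distNum {V : Type*} (H : SimpleGraph V) : ℕ :=
  sInf {d | ∃ c : V → Fin d, IsDistinguishing H d c}

section Aux

variable {V : Type*} {G : SimpleGraph V} {t : ℕ}

private lemma genMyc_adj_some_some {a b : Fin (t+1)} {i j : V} :
    (genMyc G t).Adj (some (a, i)) (some (b, j)) ↔
      ((a:ℕ) = 0 ∧ (b:ℕ) = 0 ∧ G.Adj i j) ∨ ((b:ℕ) = (a:ℕ) + 1 ∧ G.Adj i j) ∨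
        ((a:ℕ) = (b:ℕ) + 1 ∧ G.Adj j i) := by
  rw [genMyc, SimpleGraph.fromRel_adj]
  constructor
  · rintro ⟨-, (⟨h1,h2,h3⟩|⟨h1,h2⟩)|(⟨h1,h2,h3⟩|⟨h1,h2⟩)⟩
    · exact Or.inl ⟨h1,h2,h3⟩
    · exact Or.inr (Or.inl ⟨h1,h2⟩)
    · exact Or.inl ⟨h2,h1,h3.symm⟩
    · exact Or.inr (Or.inr ⟨h1,h2⟩)
  · intro h
    refine ⟨?_, ?_⟩
    · intro hEq
      simp only [Option.some.injEq, Prod.mk.injEq] at hEq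
      obtain ⟨rfl, rfl⟩ := hEq
      rcases h with ⟨-,-,h3⟩|⟨h1,-⟩|⟨h1,-⟩
      · exact G.irrefl h3
      · omega
      · omega
    · rcases h with ⟨h1,h2,h3⟩|⟨h1,h2⟩|⟨h1,h2⟩
      · exact Or.inl (Or.inl ⟨h1,h2,h3⟩)
      · exact Or.inl (Or.inr ⟨h1,h2⟩)
      · exact Or.inr (Or.inr ⟨h1,h2⟩)

private lemma genMyc_adj_none {y : Option (Fin (t+1) × V)} :
    (genMyc G t).Adj none y ↔ ∃ b : Fin (t+1), ∃ i : V, (b:ℕ) = t ∧ y = some (b, i) := by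
  rw [genMyc, SimpleGraph.fromRel_adj]
  match y with
  | none => simp
  | some (b, j) => simp

private lemma genMyc_adj_some_none {a : Fin (t+1)} {i : V} :
    (genMyc G t).Adj (some (a, i)) none ↔ (a:ℕ) = t := by
  rw [genMyc, SimpleGraph.fromRel_adj]
  simp

private lemma some_pair_inj {c : Fin (t+1)} :
    Function.Injective (fun k : V => (some (c, k) : Option (Fin (t+1) × V))) := by
  intro a b hab
  simpa using hab

private lemma ncard_neighborSet_none [Fintype V] :
    ((genMyc G t).neighborSet none).ncard = Nat.card V := by
  have hset : (genMyc G t).neighborSet none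
      = Set.range (fun i : V => (some (⟨t, Nat.lt_succ_self t⟩, i) : Option (Fin (t+1) × V))) := by
    ext y
    simp only [mem_neighborSet, genMyc_adj_none, Set.mem_range]
    constructor
    · rintro ⟨b, i, hb, rfl⟩
      exact ⟨i, by congr 2; exact Fin.ext hb.symm⟩
    · rintro ⟨i, rfl⟩
      exact ⟨_, i, rfl, rfl⟩
  rw [hset, ← Nat.card_coe_set_eq, Nat.card_range_of_injective some_pair_inj]

private lemma ncard_neighborSet_some [Fintype V] {s : Fin (t+1)} {v : V} (hs : (s:ℕ) < t) :
    ((genMyc G t).neighborSet (some (s, v))).ncard = 2 * (G.neighborSet v).ncard := by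
  set A : Fin (t+1) := ⟨if (s:ℕ) = 0 then 0 else (s:ℕ) - 1, by split <;> omega⟩ with hA
  set B : Fin (t+1) := ⟨(s:ℕ) + 1, by omega⟩ with hB
  have hAB : (A:ℕ) ≠ (B:ℕ) := by by_cases h0 : (s:ℕ) = 0 <;> simp [hA, hB, h0]
  have hset : (genMyc G t).neighborSet (some (s, v))
      = (fun k : V => (some (A, k) : Option (Fin (t+1) × V))) '' (G.neighborSet v)
        ∪ (fun k : V => (some (B, k) : Option (Fin (t+1) × V))) '' (G.neighborSet v) := by
    ext y
    match y with
    | none =>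
      simp only [mem_neighborSet, genMyc_adj_some_none, Set.mem_union, Set.mem_image]
      constructor
      · intro habs; exact absurd habs (by omega)
      · rintro (⟨k, -, hk⟩ | ⟨k, -, hk⟩) <;> exact absurd hk (by simp)
    | some (b, j) =>
      simp only [mem_neighborSet, genMyc_adj_some_some, Set.mem_union, Set.mem_image,
        Option.some.injEq, Prod.mk.injEq]
      have hAval : (A:ℕ) = if (s:ℕ) = 0 then 0 else (s:ℕ) - 1 := rfl
      have hBval : (B:ℕ) = (s:ℕ) + 1 := rfl
      constructor
      · rintro (⟨h1, h2, h3⟩ | ⟨h1, h2⟩ | ⟨h1, h2⟩)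
        · refine Or.inl ⟨j, h3, ?_, rfl⟩
          apply Fin.ext; rw [hAval, if_pos h1]; omega
        · refine Or.inr ⟨j, h2, ?_, rfl⟩
          apply Fin.ext; rw [hBval]; omega
        · refine Or.inl ⟨j, h2.symm, ?_, rfl⟩
          apply Fin.ext; rw [hAval, if_neg (by omega)]; omega
      · rintro (⟨k, hk, rfl, rfl⟩ | ⟨k, hk, rfl, rfl⟩)
        · by_cases h0 : (s:ℕ) = 0
          · exact Or.inl ⟨h0, by rw [hAval, if_pos h0], hk⟩
          · exact Or.inr (Or.inr ⟨by rw [hAval, if_neg h0]; omega, hk.symm⟩)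
        · exact Or.inr (Or.inl ⟨hBval, hk⟩)
  rw [hset, Set.ncard_union_eq, Set.ncard_image_of_injective _ some_pair_inj,
    Set.ncard_image_of_injective _ some_pair_inj]
  · ring
  · rw [Set.disjoint_left]
    rintro y ⟨k, -, rfl⟩ ⟨k', -, hk'⟩
    simp only [Option.some.injEq, Prod.mk.injEq] at hk'
    exact hAB (by rw [hk'.1])

/-- The set of vertices at distance exactly two from `a`. -/
private def D2 {W : Type*} (H : SimpleGraph W) (a : W) : Set W :=
  {y | y ≠ a ∧ ¬H.Adj a y ∧ ∃ u, H.Adj a u ∧ H.Adj u y}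

private lemma D2_map {W : Type*} {H : SimpleGraph W} (φ : H ≃g H) (a : W) :
    D2 H (φ a) = φ '' D2 H a := by
  ext y
  constructor
  · rintro ⟨h1, h2, u, hu1, hu2⟩
    refine ⟨φ.symm y, ⟨?_, ?_, φ.symm u, ?_, ?_⟩, φ.apply_symm_apply y⟩
    · intro hc
      exact h1 (by rw [← φ.apply_symm_apply y, hc])
    · intro hc
      have h3 := φ.map_adj_iff.mpr hc
      rw [φ.apply_symm_apply] at h3
      exact h2 h3
    · have h3 := φ.symm.map_adj_iff.mpr hu1
      rwa [φ.symm_apply_apply] at h3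
    · exact φ.symm.map_adj_iff.mpr hu2
  · rintro ⟨y0, ⟨h1, h2, u, hu1, hu2⟩, rfl⟩
    refine ⟨?_, ?_, φ u, ?_, ?_⟩
    · intro hc
      exact h1 (φ.injective hc)
    · intro hc
      exact h2 (φ.map_adj_iff.mp hc)
    · exact φ.map_adj_iff.mpr hu1
    · exact φ.map_adj_iff.mpr hu2

private lemma ncard_compl_singleton [Fintype V] (v : V) :
    ({v}ᶜ : Set V).ncard = Nat.card V - 1 := by
  have h1 := Set.ncard_add_ncard_compl ({v} : Set V)
  rw [Set.ncard_singleton] at h1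
  omega

end Aux

theorem stmt_6 {V : Type*} [Fintype V] (G : SimpleGraph V)
    (hn : 3 ≤ Fintype.card V) (t : ℕ) (ht : 1 ≤ t)
    (φ : genMyc G t ≃g genMyc G t) (s : Fin (t + 1)) (v : V)
    (hs : (s : ℕ) < t) (h : φ none = some (s, v)) :
    ¬ ∃ x : V, ∀ y : V, y ≠ x → G.Adj x y := by
  rintro ⟨x, hx⟩
  have hn' : 3 ≤ Nat.card V := by rwa [Nat.card_eq_fintype_card]
  -- degree computation: `Nat.card V = 2 * deg v`
  have hcard := Nat.card_congr (Iso.mapNeighborSet φ none)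
  rw [h, Nat.card_coe_set_eq, Nat.card_coe_set_eq, ncard_neighborSet_none,
    ncard_neighborSet_some hs] at hcard
  -- `v ≠ x`
  have hvx : v ≠ x := by
    rintro rfl
    have hNv : G.neighborSet v = {v}ᶜ := by
      ext y
      simp only [mem_neighborSet, Set.mem_compl_iff, Set.mem_singleton_iff]
      exact ⟨fun hy => hy.ne.symm, fun hy => hx y hy⟩
    rw [hNv, ncard_compl_singleton] at hcard
    omega
  have hxv : G.Adj x v := hx v hvx
  -- a second neighbor `z ≠ x` of `v`
  have hzex : ∃ z ∈ G.neighborSet v, z ≠ x := by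
    by_contra hc
    push_neg at hc
    have hsub : G.neighborSet v ⊆ {x} := fun y hy => hc y hy
    have h2 := Set.ncard_le_ncard hsub (Set.finite_singleton x)
    rw [Set.ncard_singleton] at h2
    omega
  obtain ⟨z, hzv, hzx⟩ := hzex
  have hvz : G.Adj v z := hzv
  have hxz : G.Adj x z := hx z hzx
  -- no two neighbors of `φ none` are adjacent
  have hNw : ∀ p q : Option (Fin (t+1) × V), (genMyc G t).Adj (φ none) p →
      (genMyc G t).Adj (φ none) q → ¬ (genMyc G t).Adj p q := by
    intro p q hp hq hpq
    have hp' := φ.symm.map_adj_iff.mpr hp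
    have hq' := φ.symm.map_adj_iff.mpr hq
    rw [φ.symm_apply_apply] at hp' hq'
    have hpq' := φ.symm.map_adj_iff.mpr hpq
    rw [genMyc_adj_none] at hp' hq'
    obtain ⟨bp, ip, hbp, hep⟩ := hp'
    obtain ⟨bq, iq, hbq, heq⟩ := hq'
    rw [hep, heq, genMyc_adj_some_some] at hpq'
    rcases hpq' with ⟨e1, -, -⟩ | ⟨e1, -⟩ | ⟨e1, -⟩ <;> omega
  by_cases hs0 : (s:ℕ) = 0
  · -- level 0: `u_x^0` and `u_z^1` are adjacent neighbors of `φ none`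
    refine hNw (some (⟨0, by omega⟩, x)) (some (⟨1, by omega⟩, z)) ?_ ?_ ?_
    · rw [h]
      exact genMyc_adj_some_some.mpr (Or.inl ⟨hs0, rfl, hxv.symm⟩)
    · rw [h]
      refine genMyc_adj_some_some.mpr (Or.inr (Or.inl ⟨?_, hvz⟩))
      show (1:ℕ) = (s:ℕ) + 1
      omega
    · exact genMyc_adj_some_some.mpr (Or.inr (Or.inl ⟨rfl, hxz⟩))
  by_cases hs1 : (s:ℕ) = 1
  · -- level 1: `u_x^0` and `u_z^0` are adjacent neighbors of `φ none`
    refine hNw (some (⟨0, by omega⟩, x)) (some (⟨0, by omega⟩, z)) ?_ ?_ ?_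
    · rw [h]
      refine genMyc_adj_some_some.mpr (Or.inr (Or.inr ⟨?_, hxv⟩))
      show (s:ℕ) = 0 + 1
      omega
    · rw [h]
      refine genMyc_adj_some_some.mpr (Or.inr (Or.inr ⟨?_, hvz.symm⟩))
      show (s:ℕ) = 0 + 1
      omega
    · exact genMyc_adj_some_some.mpr (Or.inl ⟨rfl, rfl, hxz⟩)
  -- now `2 ≤ s`: count vertices at distance exactly 2
  have hs2 : 2 ≤ (s:ℕ) := by omega
  have hcard2 : (D2 (genMyc G t) (some (s, v))).ncard = (D2 (genMyc G t) none).ncard := by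
    rw [← h, D2_map, Set.ncard_image_of_injective _ φ.injective]
  -- upper bound for the root
  have hub : (D2 (genMyc G t) none).ncard ≤ Nat.card V := by
    have hsub : D2 (genMyc G t) none ⊆
        Set.range (fun k : V => (some (⟨t - 1, by omega⟩, k) : Option (Fin (t+1) × V))) := by
      rintro y ⟨h1, h2, u, hu1, hu2⟩
      rw [genMyc_adj_none] at hu1
      obtain ⟨b, i, hb, rfl⟩ := hu1
      match y with
      | none => exact absurd rfl h1
      | some (c, j) =>
        rw [genMyc_adj_some_some] at hu2
        have hcl := c.isLt
        have hcv : (c:ℕ) = t - 1 := by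
          rcases hu2 with ⟨e1, -, -⟩ | ⟨e1, -⟩ | ⟨e1, -⟩ <;> omega
        refine ⟨j, ?_⟩
        have hceq : (⟨t - 1, by omega⟩ : Fin (t+1)) = c := by
          apply Fin.ext
          show t - 1 = (c:ℕ)
          omega
        rw [hceq]
    calc (D2 (genMyc G t) none).ncard
        ≤ (Set.range (fun k : V =>
            (some (⟨t - 1, by omega⟩, k) : Option (Fin (t+1) × V)))).ncard :=
          Set.ncard_le_ncard hsub (Set.toFinite _)
      _ = Nat.card V := by
          rw [← Nat.card_coe_set_eq, Nat.card_range_of_injective some_pair_inj]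
  -- lower bound for `u_v^s`
  have hlb : (Nat.card V - 1) + Nat.card V ≤ (D2 (genMyc G t) (some (s, v))).ncard := by
    set sm2 : Fin (t+1) := ⟨(s:ℕ) - 2, by omega⟩ with hsm2
    set sp1 : Fin (t+1) := ⟨(s:ℕ) + 1, by omega⟩ with hsp1
    set sm1 : Fin (t+1) := ⟨(s:ℕ) - 1, by omega⟩ with hsm1
    have hsubA : (fun k : V => (some (s, k) : Option (Fin (t+1) × V))) '' {v}ᶜ
        ⊆ D2 (genMyc G t) (some (s, v)) := by
      rintro y ⟨k, hk, rfl⟩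
      rw [Set.mem_compl_iff, Set.mem_singleton_iff] at hk
      refine ⟨?_, ?_, ?_⟩
      · intro hc
        simp only [Option.some.injEq, Prod.mk.injEq] at hc
        exact hk hc.2
      · rw [genMyc_adj_some_some]
        rintro (⟨e1, -, -⟩ | ⟨e1, -⟩ | ⟨e1, -⟩) <;> omega
      · by_cases hkx : k = x
        · subst hkx
          refine ⟨some (sp1, z), ?_, ?_⟩
          · exact genMyc_adj_some_some.mpr (Or.inr (Or.inl ⟨rfl, hvz⟩))
          · exact genMyc_adj_some_some.mpr (Or.inr (Or.inr ⟨rfl, hxz⟩))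
        · refine ⟨some (sp1, x), ?_, ?_⟩
          · exact genMyc_adj_some_some.mpr (Or.inr (Or.inl ⟨rfl, hxv.symm⟩))
          · exact genMyc_adj_some_some.mpr (Or.inr (Or.inr ⟨rfl, (hx k hkx).symm⟩))
    have hsubB : Set.range (fun k : V => (some (sm2, k) : Option (Fin (t+1) × V)))
        ⊆ D2 (genMyc G t) (some (s, v)) := by
      rintro y ⟨k, rfl⟩
      refine ⟨?_, ?_, ?_⟩
      · intro hc
        simp only [Option.some.injEq, Prod.mk.injEq] at hc
        have := congrArg Fin.val hc.1
        simp [hsm2] at this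
        omega
      · rw [genMyc_adj_some_some]
        have : (sm2:ℕ) = (s:ℕ) - 2 := rfl
        rintro (⟨e1, -, -⟩ | ⟨e1, -⟩ | ⟨e1, -⟩) <;> omega
      · by_cases hkx : k = x
        · subst hkx
          refine ⟨some (sm1, z), ?_, ?_⟩
          · refine genMyc_adj_some_some.mpr (Or.inr (Or.inr ⟨?_, hvz.symm⟩))
            show (s:ℕ) = (s:ℕ) - 1 + 1
            omega
          · refine genMyc_adj_some_some.mpr (Or.inr (Or.inr ⟨?_, hxz⟩))
            show (s:ℕ) - 1 = (s:ℕ) - 2 + 1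
            omega
        · refine ⟨some (sm1, x), ?_, ?_⟩
          · refine genMyc_adj_some_some.mpr (Or.inr (Or.inr ⟨?_, hxv⟩))
            show (s:ℕ) = (s:ℕ) - 1 + 1
            omega
          · refine genMyc_adj_some_some.mpr (Or.inr (Or.inr ⟨?_, (hx k hkx).symm⟩))
            show (s:ℕ) - 1 = (s:ℕ) - 2 + 1
            omega
    have hdisj : Disjoint ((fun k : V => (some (s, k) : Option (Fin (t+1) × V))) '' {v}ᶜ)
        (Set.range (fun k : V => (some (sm2, k) : Option (Fin (t+1) × V)))) := by
      rw [Set.disjoint_left]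
      rintro y ⟨k, -, rfl⟩ ⟨k', hk'⟩
      simp only [Option.some.injEq, Prod.mk.injEq] at hk'
      have := congrArg Fin.val hk'.1
      simp [hsm2] at this
      omega
    have hAcard : ((fun k : V => (some (s, k) : Option (Fin (t+1) × V))) '' {v}ᶜ).ncard
        = Nat.card V - 1 := by
      rw [Set.ncard_image_of_injective _ some_pair_inj, ncard_compl_singleton]
    have hBcard : (Set.range (fun k : V => (some (sm2, k) : Option (Fin (t+1) × V)))).ncard
        = Nat.card V := by
      rw [← Nat.card_coe_set_eq, Nat.card_range_of_injective some_pair_inj]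
    calc (Nat.card V - 1) + Nat.card V
        = ((fun k : V => (some (s, k) : Option (Fin (t+1) × V))) '' {v}ᶜ
            ∪ Set.range (fun k : V => (some (sm2, k) : Option (Fin (t+1) × V)))).ncard := by
          rw [Set.ncard_union_eq hdisj (Set.toFinite _) (Set.toFinite _), hAcard, hBcard]
      _ ≤ (D2 (genMyc G t) (some (s, v))).ncard :=
          Set.ncard_le_ncard (Set.union_subset hsubA hsubB) (Set.toFinite _)
  omega
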